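/- arXiv:2510.26975 — 4 statements merged into one kernel-verified Lean document; each statement's English description precedes it below -/
import Mathlib

section
/- Let (G, T) be a graft and let F be a join of (G, T). Then F is a minimum join (a join of minimum cardinality) if and only if w_F(C) ≥ 0 holds for every circuit C of G. -/
open SimpleGraph
open scoped Classical

variable {V : Type*} [Fintype V] [DecidableEq V]

/-- `(G, T)` is a graft: every connected component of `G` contains an even number
of vertices of `T`. -/
def IsGraft (G : SimpleGraph V) (T : Set V) : Prop :=
  ∀ v : V, Even {u ∈ T | G.Reachable v u}.ncard

/-- `F` is a join of `(G, T)`: `F ⊆ E(G)` and every vertex `v` is incident to an odd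
number of edges of `F` exactly when `v ∈ T`. -/
def IsJoin (G : SimpleGraph V) (T : Set V) (F : Set (Sym2 V)) : Prop :=
  F ⊆ G.edgeSet ∧ ∀ v : V, (Odd {e ∈ F | v ∈ e}.ncard ↔ v ∈ T)

/-- `F` is a minimum join of `(G, T)`. -/
def IsMinJoin (G : SimpleGraph V) (T : Set V) (F : Set (Sym2 V)) : Prop :=
  IsJoin G T F ∧ ∀ F' : Set (Sym2 V), IsJoin G T F' → F.ncard ≤ F'.ncard

/-- `F`-weight of an edge: `-1` if the edge is in `F`, `+1` otherwise. -/
noncomputable def ew (F : Set (Sym2 V)) (e : Sym2 V) : ℤ :=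
  if e ∈ F then -1 else 1

/-- `F`-weight of a walk: the sum of the `F`-weights of its edges. -/
noncomputable def walkWeight {G : SimpleGraph V} {x y : V} (F : Set (Sym2 V))
    (p : G.Walk x y) : ℤ :=
  (p.edges.map (ew F)).sum

/-- `F`-distance between `x` and `y`: the minimum `F`-weight of a path between them. -/
noncomputable def distF (G : SimpleGraph V) (F : Set (Sym2 V)) (x y : V) : ℤ :=
  sInf {w : ℤ | ∃ p : G.Walk x y, p.IsPath ∧ walkWeight F p = w}

/-- `F` covers the vertex `v`. -/
def Covers (F : Set (Sym2 V)) (v : V) : Prop := ∃ e ∈ F, v ∈ e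

/-- The edge set `F` is nonempty and determines a connected subgraph. -/
def ConnectedEdgeSet (F : Set (Sym2 V)) : Prop :=
  F.Nonempty ∧ ∀ x y : V, Covers F x → Covers F y →
    (SimpleGraph.fromEdgeSet F).Reachable x y

/-- `e` has exactly one endpoint in `K`. -/
def Crossing (K : Set V) (e : Sym2 V) : Prop :=
  ∃ x y : V, e = s(x, y) ∧ x ∈ K ∧ y ∉ K

/-- The subgraph of `G` induced on `S` (viewed as a graph on the same vertex type). -/
def sgRestrict (G : SimpleGraph V) (S : Set V) : SimpleGraph V where
  Adj x y := G.Adj x y ∧ x ∈ S ∧ y ∈ S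
  symm := ⟨fun x y h => ⟨h.1.symm, h.2.2, h.2.1⟩⟩
  loopless := ⟨fun x h => G.loopless.irrefl x h.1⟩

/-- The subgraph of `G` induced on `S`, with all edges having both endpoints in `L` deleted. -/
def sgRestrictDel (G : SimpleGraph V) (S L : Set V) : SimpleGraph V where
  Adj x y := G.Adj x y ∧ x ∈ S ∧ y ∈ S ∧ ¬(x ∈ L ∧ y ∈ L)
  symm := ⟨fun x y h => ⟨h.1.symm, h.2.2.1, h.2.1, fun hc => h.2.2.2 ⟨hc.2, hc.1⟩⟩⟩
  loopless := ⟨fun x h => G.loopless.irrefl x h.1⟩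

/-- `K` is (the vertex set of) a connected component of the subgraph of `G` induced on `S`. -/
def IsCompOn (G : SimpleGraph V) (S K : Set V) : Prop :=
  ∃ v ∈ S, K = {u | (sgRestrict G S).Reachable v u}

set_option linter.unusedSectionVars false
set_option linter.unusedTactic false

section Helpers
variable {G : SimpleGraph V}

lemma ncard_sep_eq (F : Set (Sym2 V)) (P : Sym2 V → Prop) [DecidablePred P] :
    {e ∈ F | P e}.ncard = (F.toFinset.filter P).card := by
  rw [Set.ncard_eq_toFinset_card']
  congr 1
  ext e
  simp

lemma card_symmDiff_parity (A B : Finset (Sym2 V)) :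
    (symmDiff A B).card % 2 = (A.card + B.card) % 2 := by
  have hd : Disjoint (A \ B) (B \ A) := disjoint_sdiff_sdiff
  have h1 : (A \ B).card + (A ∩ B).card = A.card := Finset.card_sdiff_add_card_inter A B
  have h2 : (B \ A).card + (B ∩ A).card = B.card := Finset.card_sdiff_add_card_inter B A
  have h3 : (symmDiff A B).card = (A \ B).card + (B \ A).card := by
    rw [symmDiff_def]
    exact Finset.card_union_of_disjoint hd
  have h4 : (A ∩ B).card = (B ∩ A).card := by rw [Finset.inter_comm]
  omega

lemma filter_symmDiff' (A B : Finset (Sym2 V)) (P : Sym2 V → Prop) [DecidablePred P] :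
    (symmDiff A B).filter P = symmDiff (A.filter P) (B.filter P) := by
  ext e
  simp only [Finset.mem_filter, Finset.mem_symmDiff]
  tauto

lemma sum_ew_eq (F : Set (Sym2 V)) (C : Finset (Sym2 V)) :
    ∑ e ∈ C, ew F e =
      ((C.filter (fun e => e ∉ F)).card : ℤ) - ((C.filter (fun e => e ∈ F)).card : ℤ) := by
  rw [← Finset.sum_filter_add_sum_filter_not C (fun e => e ∈ F)]
  have h1 : ∑ e ∈ C.filter (fun e => e ∈ F), ew F e
      = ∑ _e ∈ C.filter (fun e => e ∈ F), (-1 : ℤ) :=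
    Finset.sum_congr rfl (fun e he => by
      simp only [Finset.mem_filter] at he
      simp [ew, he.2])
  have h2 : ∑ e ∈ C.filter (fun e => e ∉ F), ew F e
      = ∑ _e ∈ C.filter (fun e => e ∉ F), (1 : ℤ) :=
    Finset.sum_congr rfl (fun e he => by
      simp only [Finset.mem_filter] at he
      simp [ew, he.2])
  rw [h1, h2, Finset.sum_const, Finset.sum_const]
  simp
  ring

lemma walk_countP_even {a b : V} (p : G.Walk a b) (x : V) :
    Even (p.edges.countP (fun e => decide (x ∈ e))) ↔ (x = a ↔ x = b) := by
  induction p with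
  | nil => simp
  | @cons a c b h q ih =>
    have hne : a ≠ c := h.ne
    have hnand : ¬(x = a ∧ x = c) := fun ⟨h1, h2⟩ => hne (h1 ▸ h2)
    simp only [Walk.edges_cons, List.countP_cons, Sym2.mem_iff, decide_eq_true_eq]
    by_cases hd : x = a ∨ x = c
    · simp only [hd, if_pos, decide_eq_true_eq]
      rw [Nat.even_add_one, ih]
      tauto
    · simp only [decide_eq_true_eq, hd, if_neg, add_zero, ih]
      push_neg at hd
      tauto

lemma path_start_unique {x y : V} (p : G.Walk x y) :
    p.IsPath → ∀ e1 ∈ p.edges, ∀ e2 ∈ p.edges, x ∈ e1 → x ∈ e2 → e1 = e2 := by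
  induction p with
  | nil => simp
  | @cons a c b h q ih =>
    intro hp e1 h1 e2 h2 hx1 hx2
    rw [Walk.cons_isPath_iff] at hp
    have key : ∀ e ∈ q.edges, a ∉ e := by
      intro e he hae
      obtain ⟨z, rfl⟩ := Sym2.mem_iff_exists.mp hae
      exact hp.2 (q.fst_mem_support_of_mem_edges he)
    simp only [Walk.edges_cons, List.mem_cons] at h1 h2
    rcases h1 with rfl | h1
    · rcases h2 with rfl | h2
      · rfl
      · exact absurd hx2 (key e2 h2)
    · exact absurd hx1 (key e1 h1)

lemma path_end_unique {x y : V} (p : G.Walk x y) (hp : p.IsPath) {e1 e2 : Sym2 V}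
    (h1 : e1 ∈ p.edges) (h2 : e2 ∈ p.edges) (hy1 : y ∈ e1) (hy2 : y ∈ e2) : e1 = e2 := by
  apply path_start_unique p.reverse hp.reverse e1 ?_ e2 ?_ hy1 hy2 <;>
    simpa [Walk.edges_reverse, List.mem_reverse]

lemma isPath_concat {x y z : V} {p : G.Walk x y} (hp : p.IsPath) (h : G.Adj y z)
    (hz : z ∉ p.support) : (p.concat h).IsPath := by
  have h1 : (p.concat h).reverse.IsPath := by
    rw [Walk.reverse_concat, Walk.cons_isPath_iff]
    exact ⟨hp.reverse, by simpa using hz⟩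
  simpa only [Walk.reverse_reverse] using h1.reverse

lemma exists_cycle_in (G : SimpleGraph V) (D : Finset (Sym2 V)) (hD : ↑D ⊆ G.edgeSet)
    (hne : D.Nonempty) (heven : ∀ v : V, Even ((D.filter (fun e => v ∈ e)).card)) :
    ∃ (v : V) (c : G.Walk v v), c.IsCycle ∧ ∀ e ∈ c.edges, e ∈ D := by
  classical
  set H : SimpleGraph V := fromEdgeSet ↑D with hH
  have hHedge : H.edgeSet = ↑D := by
    rw [hH, edgeSet_fromEdgeSet]
    ext e
    simp only [Set.mem_diff, Set.mem_setOf_eq, Finset.mem_coe, and_iff_left_iff_imp]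
    intro he
    exact G.not_isDiag_of_mem_edgeSet (hD he)
  set P : ℕ → Prop := fun n => ∃ (x y : V) (p : H.Walk x y), p.IsPath ∧ p.length = n with hPdef
  obtain ⟨e0, he0⟩ := hne
  revert he0
  induction e0 using Sym2.ind with | _ a b => ?_
  intro he0
  have hadj0 : H.Adj a b := by
    rw [← SimpleGraph.mem_edgeSet, hHedge]
    exact he0
  have hP1 : P 1 := by
    refine ⟨a, b, Walk.cons hadj0 Walk.nil, ?_, rfl⟩
    simp [Walk.cons_isPath_iff, hadj0.ne]
  have hcard1 : 1 ≤ Fintype.card V := Fintype.card_pos_iff.mpr ⟨a⟩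
  set N := Nat.findGreatest P (Fintype.card V) with hN
  have hN1 : 1 ≤ N := Nat.le_findGreatest hcard1 hP1
  obtain ⟨x, y, p, hp, hlen⟩ : P N := Nat.findGreatest_spec hcard1 hP1
  have hmax : ∀ z, H.Adj y z → z ∈ p.support := by
    intro z hz
    by_contra hzs
    have hpath : (p.concat hz).IsPath := isPath_concat hp hz hzs
    have hPN1 : P (N + 1) := ⟨x, z, p.concat hz, hpath, by simp [Walk.length_concat, hlen]⟩
    exact Nat.findGreatest_is_greatest (Nat.lt_succ_self N)
      (by have := hpath.length_lt; simp [Walk.length_concat, hlen] at this; omega) hPN1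
  -- last edge
  have hnilrev : ¬ p.reverse.Nil := by
    rw [Walk.not_nil_iff_lt_length, Walk.length_reverse]
    omega
  obtain ⟨u, hadj1, q1, hq1⟩ := Walk.not_nil_iff.mp hnilrev
  have he1p : s(y, u) ∈ p.edges := by
    have : s(y, u) ∈ p.reverse.edges := by rw [hq1]; simp
    simpa [Walk.edges_reverse, List.mem_reverse] using this
  have he1D : s(y, u) ∈ D := by
    have := p.edges_subset_edgeSet he1p
    rwa [hHedge, Finset.mem_coe] at this
  -- find a fresh edge at y
  have hex : ∃ e2 ∈ D, y ∈ e2 ∧ e2 ∉ p.edges := by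
    by_contra hcon
    push_neg at hcon
    have hsub : D.filter (fun e => y ∈ e) ⊆ {s(y, u)} := by
      intro e hefil
      simp only [Finset.mem_filter] at hefil
      rw [Finset.mem_singleton]
      exact path_end_unique p hp (hcon e hefil.1 hefil.2) he1p hefil.2 (by simp)
    have hmem : s(y, u) ∈ D.filter (fun e => y ∈ e) := by
      simp [he1D]
    have hcard : (D.filter (fun e => y ∈ e)).card = 1 := by
      have h1 := Finset.card_le_card hsub
      have h2 := Finset.card_pos.mpr ⟨_, hmem⟩
      simp only [Finset.card_singleton] at h1
      omega
    have := heven y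
    rw [hcard] at this
    simp at this
  obtain ⟨e2, he2D, hye2, he2p⟩ := hex
  obtain ⟨z, rfl⟩ := Sym2.mem_iff_exists.mp hye2
  have hadj2 : H.Adj y z := by
    rw [← SimpleGraph.mem_edgeSet, hHedge]
    exact he2D
  have hzs : z ∈ p.support := hmax z hadj2
  set q := p.dropUntil z hzs with hq
  have hqpath : q.IsPath := hp.dropUntil hzs
  have hcyc : (Walk.cons hadj2 q).IsCycle := by
    rw [Walk.cons_isCycle_iff]
    exact ⟨hqpath, fun hmem => he2p (Walk.edges_dropUntil_subset p hzs hmem)⟩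
  have hsubD : ∀ e ∈ (Walk.cons hadj2 q).edges, e ∈ D := by
    intro e he
    have := (Walk.cons hadj2 q).edges_subset_edgeSet he
    rwa [hHedge, Finset.mem_coe] at this
  have hsubG : ∀ e ∈ (Walk.cons hadj2 q).edges, e ∈ G.edgeSet := fun e he => hD (hsubD e he)
  refine ⟨y, (Walk.cons hadj2 q).transfer G hsubG, hcyc.transfer hsubG, ?_⟩
  intro e he
  rw [Walk.edges_transfer] at he
  exact hsubD e he

lemma cycle_filter_even {v : V} {c : G.Walk v v} (hc : c.IsCycle) (u : V) :
    Even ((c.edges.toFinset.filter (fun e => u ∈ e)).card) := by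
  have hnd : c.edges.Nodup := hc.edges_nodup
  have h1 : c.edges.toFinset.filter (fun e => u ∈ e)
      = (c.edges.filter (fun e => decide (u ∈ e))).toFinset := by
    ext e
    simp [List.mem_filter]
  rw [h1, List.toFinset_card_of_nodup (hnd.filter _), ← List.countP_eq_length_filter]
  exact (walk_countP_even c u).mpr Iff.rfl

lemma walkWeight_eq_sum {v : V} {c : G.Walk v v} (hc : c.IsCycle) (F : Set (Sym2 V)) :
    walkWeight F c = ∑ e ∈ c.edges.toFinset, ew F e := by
  rw [walkWeight, List.sum_toFinset _ hc.edges_nodup]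

lemma key_nonneg (G : SimpleGraph V) (F : Set (Sym2 V))
    (hcyc : ∀ (v : V) (c : G.Walk v v), c.IsCycle → 0 ≤ walkWeight F c) :
    ∀ D : Finset (Sym2 V), ↑D ⊆ G.edgeSet →
      (∀ v : V, Even ((D.filter (fun e => v ∈ e)).card)) → 0 ≤ ∑ e ∈ D, ew F e := by
  intro D
  induction D using Finset.strongInduction with
  | _ D ih =>
    intro hD heven
    rcases D.eq_empty_or_nonempty with rfl | hne
    · simp
    obtain ⟨v, c, hc, hcD⟩ := exists_cycle_in G D hD hne heven
    set C := c.edges.toFinset with hC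
    have hCD : C ⊆ D := fun e he => hcD e (List.mem_toFinset.mp he)
    have hCne : C.Nonempty := by
      have h3 := hc.three_le_length
      have hnnil : c.edges ≠ [] := by
        intro h
        have := c.length_edges
        rw [h] at this
        simp at this
        omega
      exact ⟨c.edges.head hnnil, List.mem_toFinset.mpr (List.head_mem hnnil)⟩
    have hssub : D \ C ⊂ D := Finset.sdiff_ssubset hCD hCne
    have hsplit : ∑ e ∈ D \ C, ew F e + ∑ e ∈ C, ew F e = ∑ e ∈ D, ew F e :=
      Finset.sum_sdiff hCD
    have h1 : 0 ≤ ∑ e ∈ C, ew F e := by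
      rw [← walkWeight_eq_sum hc]
      exact hcyc v c hc
    have h2 : 0 ≤ ∑ e ∈ D \ C, ew F e := by
      apply ih _ hssub
      · exact Set.Subset.trans (by exact_mod_cast Finset.sdiff_subset (α := Sym2 V) (s := D) (t := C)) hD
      · intro u
        have hfil : (D \ C).filter (fun e => u ∈ e)
            = D.filter (fun e => u ∈ e) \ C.filter (fun e => u ∈ e) := by
          ext e
          simp only [Finset.mem_sdiff, Finset.mem_filter]
          tauto
        rw [hfil, Finset.card_sdiff_of_subset (Finset.filter_subset_filter _ hCD)]
        have hDu := heven u
        have hCu := cycle_filter_even hc u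
        have hle : (C.filter (fun e => u ∈ e)).card ≤ (D.filter (fun e => u ∈ e)).card :=
          Finset.card_le_card (Finset.filter_subset_filter _ hCD)
        rw [Nat.even_sub hle]
        exact iff_of_true hDu hCu
    linarith

end Helpers

/-- a join `F` of a graft `(G, T)` is a minimum join iff every
circuit of `G` has nonnegative `F`-weight. -/
theorem stmt_1 (G : SimpleGraph V) (T : Set V) (F : Set (Sym2 V))
    (hG : IsGraft G T) (hF : IsJoin G T F) :
    IsMinJoin G T F ↔ ∀ (v : V) (c : G.Walk v v), c.IsCycle → 0 ≤ walkWeight F c := by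
  constructor
  · rintro ⟨hFJ, hmin⟩ v c hc
    by_contra hneg
    push_neg at hneg
    have hsubC : ∀ e ∈ c.edges.toFinset, e ∈ G.edgeSet := fun e he =>
      c.edges_subset_edgeSet (List.mem_toFinset.mp he)
    have hJ : IsJoin G T ↑(symmDiff F.toFinset c.edges.toFinset) := by
      constructor
      · intro e he
        rw [Finset.mem_coe, Finset.mem_symmDiff] at he
        rcases he with ⟨he, -⟩ | ⟨he, -⟩
        · exact hF.1 (Set.mem_toFinset.mp he)
        · exact hsubC e he
      · intro u
        have h1 : {e ∈ (↑(symmDiff F.toFinset c.edges.toFinset) : Set (Sym2 V)) | u ∈ e}.ncard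
            = ((symmDiff F.toFinset c.edges.toFinset).filter (fun e => u ∈ e)).card := by
          rw [ncard_sep_eq, Finset.toFinset_coe]
        have hFodd := hF.2 u
        rw [ncard_sep_eq] at hFodd
        have hCev := cycle_filter_even hc u
        rw [h1, filter_symmDiff', ← hFodd]
        have hpar := card_symmDiff_parity (F.toFinset.filter (fun e => u ∈ e))
          (c.edges.toFinset.filter (fun e => u ∈ e))
        rw [Nat.odd_iff, Nat.odd_iff, hpar]
        rw [Nat.even_iff] at hCev
        omega
    have hkey : (((symmDiff F.toFinset c.edges.toFinset) : Finset (Sym2 V)).card : ℤ)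
        = (F.ncard : ℤ) + walkWeight F c := by
      rw [Set.ncard_eq_toFinset_card' F]
      have hw : walkWeight F c
          = ((c.edges.toFinset.filter (fun e => e ∉ F)).card : ℤ)
            - ((c.edges.toFinset.filter (fun e => e ∈ F)).card : ℤ) := by
        rw [walkWeight_eq_sum hc, sum_ew_eq]
      have hCin : c.edges.toFinset.filter (fun e => e ∈ F) = c.edges.toFinset ∩ F.toFinset := by
        ext e
        simp [Set.mem_toFinset]
      have hCout : c.edges.toFinset.filter (fun e => e ∉ F) = c.edges.toFinset \ F.toFinset := by
        ext e
        simp [Set.mem_toFinset]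
      have hA : (F.toFinset \ c.edges.toFinset).card + (F.toFinset ∩ c.edges.toFinset).card
          = F.toFinset.card := Finset.card_sdiff_add_card_inter F.toFinset c.edges.toFinset
      have hB : (c.edges.toFinset \ F.toFinset).card + (c.edges.toFinset ∩ F.toFinset).card
          = c.edges.toFinset.card := Finset.card_sdiff_add_card_inter c.edges.toFinset F.toFinset
      have hS : (symmDiff F.toFinset c.edges.toFinset).card
          = (F.toFinset \ c.edges.toFinset).card + (c.edges.toFinset \ F.toFinset).card := by
        rw [symmDiff_def]
        exact Finset.card_union_of_disjoint disjoint_sdiff_sdiff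
      have hI : (F.toFinset ∩ c.edges.toFinset).card = (c.edges.toFinset ∩ F.toFinset).card := by
        rw [Finset.inter_comm]
      rw [hw, hCin, hCout]
      push_cast
      omega
    have hlt : (↑(symmDiff F.toFinset c.edges.toFinset) : Set (Sym2 V)).ncard < F.ncard := by
      rw [Set.ncard_coe_finset]
      have : (((symmDiff F.toFinset c.edges.toFinset) : Finset (Sym2 V)).card : ℤ)
          < (F.ncard : ℤ) := by omega
      exact_mod_cast this
    exact absurd (hmin _ hJ) (not_le.mpr hlt)
  · intro hcyc
    refine ⟨hF, ?_⟩
    intro F' hF'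
    have hDsub : ↑(symmDiff F.toFinset F'.toFinset) ⊆ G.edgeSet := by
      intro e he
      rw [Finset.mem_coe, Finset.mem_symmDiff] at he
      rcases he with ⟨he, -⟩ | ⟨he, -⟩
      · exact hF.1 (Set.mem_toFinset.mp he)
      · exact hF'.1 (Set.mem_toFinset.mp he)
    have hDeven : ∀ u : V,
        Even (((symmDiff F.toFinset F'.toFinset).filter (fun e => u ∈ e)).card) := by
      intro u
      have h2 : Odd ((F.toFinset.filter (fun e => u ∈ e)).card) ↔ u ∈ T := by
        rw [← ncard_sep_eq]
        exact hF.2 u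
      have h3 : Odd ((F'.toFinset.filter (fun e => u ∈ e)).card) ↔ u ∈ T := by
        rw [← ncard_sep_eq]
        exact hF'.2 u
      rw [filter_symmDiff', Nat.even_iff, card_symmDiff_parity]
      rw [Nat.odd_iff] at h2 h3
      by_cases hu : u ∈ T
      · rw [iff_true_right hu] at h2 h3
        omega
      · rw [iff_false_right hu] at h2 h3
        omega
    have h0 := key_nonneg G F hcyc (symmDiff F.toFinset F'.toFinset) hDsub hDeven
    rw [sum_ew_eq] at h0
    have hin : (symmDiff F.toFinset F'.toFinset).filter (fun e => e ∈ F)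
        = F.toFinset \ F'.toFinset := by
      ext e
      simp only [Finset.mem_filter, Finset.mem_symmDiff, Finset.mem_sdiff, Set.mem_toFinset]
      tauto
    have hout : (symmDiff F.toFinset F'.toFinset).filter (fun e => e ∉ F)
        = F'.toFinset \ F.toFinset := by
      ext e
      simp only [Finset.mem_filter, Finset.mem_symmDiff, Finset.mem_sdiff, Set.mem_toFinset]
      tauto
    rw [hin, hout] at h0
    have hA' : (F.toFinset \ F'.toFinset).card + (F.toFinset ∩ F'.toFinset).card
        = F.toFinset.card := Finset.card_sdiff_add_card_inter _ _
    have hB' : (F'.toFinset \ F.toFinset).card + (F'.toFinset ∩ F.toFinset).card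
        = F'.toFinset.card := Finset.card_sdiff_add_card_inter _ _
    have hI : (F.toFinset ∩ F'.toFinset).card = (F'.toFinset ∩ F.toFinset).card := by
      rw [Finset.inter_comm]
    rw [Set.ncard_eq_toFinset_card' F, Set.ncard_eq_toFinset_card' F']
    omega
end

section
/- Let (G, T) be a graft, let x, y ∈ V(G) lie in the same connected component of G, and let F₁ and F₂ be two minimum joins of (G, T). Then dist_{F₁}(x, y) = dist_{F₂}(x, y); that is, the F-distance between x and y does not depend on the choice of the minimum join F. -/
open SimpleGraph
open scoped Classical
open scoped symmDiff
set_option linter.unusedSectionVars false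

variable {V : Type*} [Fintype V] [DecidableEq V]

noncomputable def wtF (F : Set (Sym2 V)) (s : Finset (Sym2 V)) : ℤ := ∑ e ∈ s, ew F e

lemma ncard_sep_eq_s2 (A : Set (Sym2 V)) (v : V) :
    {e ∈ A | v ∈ e}.ncard = (A.toFinset.filter (fun e => v ∈ e)).card := by
  rw [Set.ncard_eq_toFinset_card']
  congr 1
  ext e
  simp

lemma card_symmDiff_aux (s t : Finset (Sym2 V)) :
    (s ∆ t).card + 2 * (s ∩ t).card = s.card + t.card := by
  have hd : Disjoint (s \ t) (t \ s) := disjoint_sdiff_sdiff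
  have h0 : s ∆ t = (s \ t) ∪ (t \ s) := by rw [symmDiff_def, Finset.sup_eq_union]
  have h1 := Finset.card_sdiff_add_card_inter s t
  have h2 := Finset.card_sdiff_add_card_inter t s
  rw [Finset.inter_comm] at h2
  rw [h0, Finset.card_union_of_disjoint hd]
  omega

lemma filter_symmDiff_aux (s t : Finset (Sym2 V)) (p : Sym2 V → Prop) [DecidablePred p] :
    (s ∆ t).filter p = (s.filter p) ∆ (t.filter p) := by
  ext e
  simp only [Finset.mem_filter, Finset.mem_symmDiff]
  tauto

lemma wtF_eq_card (F : Set (Sym2 V)) (s : Finset (Sym2 V)) :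
    wtF F s = (s.card : ℤ) - 2 * ((s.filter (· ∈ F)).card : ℤ) := by
  unfold wtF
  rw [← Finset.sum_filter_add_sum_filter_not s (· ∈ F)]
  have h1 : ∑ e ∈ s.filter (· ∈ F), ew F e = -((s.filter (· ∈ F)).card : ℤ) := by
    rw [Finset.sum_congr rfl (fun e he => by
      simp only [Finset.mem_filter] at he
      simp [ew, he.2] : ∀ e ∈ s.filter (· ∈ F), ew F e = -1)]
    simp
  have h2 : ∑ e ∈ s.filter (¬ · ∈ F), ew F e = ((s.filter (¬ · ∈ F)).card : ℤ) := by
    rw [Finset.sum_congr rfl (fun e he => by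
      simp only [Finset.mem_filter] at he
      simp [ew, he.2] : ∀ e ∈ s.filter (¬ · ∈ F), ew F e = 1)]
    simp
  have h3 := Finset.card_filter_add_card_filter_not (s := s) (p := (· ∈ F))
  rw [h1, h2]
  push_cast
  omega

lemma wtF_even_nonneg {G : SimpleGraph V} {T : Set V} {F : Set (Sym2 V)}
    (hF : IsMinJoin G T F) (C : Finset (Sym2 V)) (hC : ∀ e ∈ C, e ∈ G.edgeSet)
    (hev : ∀ v : V, Even ((C.filter (fun e => v ∈ e)).card)) :
    0 ≤ wtF F C := by
  classical
  set s := F.toFinset with hs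
  have hmemF : ∀ e, e ∈ s ↔ e ∈ F := fun e => Set.mem_toFinset
  have hJ : IsJoin G T ↑(s ∆ C) := by
    constructor
    · intro e he
      rw [Finset.mem_coe, Finset.mem_symmDiff] at he
      rcases he with ⟨h, _⟩ | ⟨h, _⟩
      · exact hF.1.1 ((hmemF e).1 h)
      · exact hC e h
    · intro v
      rw [ncard_sep_eq_s2, Finset.toFinset_coe, filter_symmDiff_aux]
      have h2 := card_symmDiff_aux (s.filter (fun e => v ∈ e)) (C.filter (fun e => v ∈ e))
      have h3 := hF.1.2 v
      rw [ncard_sep_eq_s2, ← hs] at h3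
      rw [← h3]
      have h4 := hev v
      simp only [Nat.odd_iff, Nat.even_iff] at h4 ⊢
      omega
  have hmin := hF.2 _ hJ
  rw [Set.ncard_eq_toFinset_card' F, Set.ncard_coe_finset, ← hs] at hmin
  have h2 := card_symmDiff_aux s C
  have h5 : (s ∩ C).card = (C.filter (· ∈ F)).card := by
    congr 1
    ext e
    simp only [Finset.mem_inter, Finset.mem_filter, hmemF]
    tauto
  rw [wtF_eq_card]
  omega

lemma path_filter_odd {G : SimpleGraph V} {x y : V} (hxy : x ≠ y) {p : G.Walk x y}
    (hp : p.IsTrail) (v : V) :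
    Odd ((p.edges.toFinset.filter (fun e => v ∈ e)).card) ↔ (v = x ∨ v = y) := by
  have h1 : p.edges.toFinset.filter (fun e => v ∈ e)
      = (p.edges.filter (fun e => v ∈ e)).toFinset := by
    ext e
    simp [List.mem_filter]
  have hnodup : (p.edges.filter (fun e => v ∈ e)).Nodup := hp.edges_nodup.filter _
  rw [h1, List.card_toFinset, hnodup.dedup, ← List.countP_eq_length_filter,
    ← Nat.not_even_iff_odd, hp.even_countP_edges_iff v]
  simp only [hxy, ne_eq, not_false_eq_true, forall_true_left]
  push_neg
  constructor
  · rintro h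
    by_cases hvx : v = x
    · exact Or.inl hvx
    · exact Or.inr (h hvx)
  · rintro (rfl | rfl) h
    · exact absurd rfl h
    · rfl

lemma wtF_symmDiff (F₁ F₂ : Set (Sym2 V)) (A D : Finset (Sym2 V))
    (hflip : ∀ e ∈ D, ew F₁ e = - ew F₂ e) (hsame : ∀ e ∉ D, ew F₁ e = ew F₂ e) :
    wtF F₁ (A ∆ D) = wtF F₂ A + wtF F₁ D := by
  have h0 : A ∆ D = (A \ D) ∪ (D \ A) := by rw [symmDiff_def, Finset.sup_eq_union]
  have e1 : wtF F₂ A = ∑ e ∈ A \ D, ew F₂ e + ∑ e ∈ A ∩ D, ew F₂ e := by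
    unfold wtF
    rw [← Finset.sum_union (Finset.disjoint_sdiff_inter A D), Finset.sdiff_union_inter]
  have e2 : wtF F₁ D = ∑ e ∈ D \ A, ew F₁ e + ∑ e ∈ A ∩ D, ew F₁ e := by
    unfold wtF
    rw [Finset.inter_comm, ← Finset.sum_union (Finset.disjoint_sdiff_inter D A),
      Finset.sdiff_union_inter]
  have e3 : ∑ e ∈ A \ D, ew F₁ e = ∑ e ∈ A \ D, ew F₂ e :=
    Finset.sum_congr rfl fun e he => hsame e (Finset.mem_sdiff.1 he).2
  have e4 : ∑ e ∈ A ∩ D, ew F₁ e = - ∑ e ∈ A ∩ D, ew F₂ e := by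
    rw [← Finset.sum_neg_distrib]
    exact Finset.sum_congr rfl fun e he => hflip e (Finset.mem_inter.1 he).2
  have e5 : wtF F₁ (A ∆ D) = ∑ e ∈ A \ D, ew F₁ e + ∑ e ∈ D \ A, ew F₁ e := by
    unfold wtF
    rw [h0, Finset.sum_union disjoint_sdiff_sdiff]
  rw [e5, e1, e2, e3, e4]
  ring

lemma walkWeight_eq_wtF (F : Set (Sym2 V)) {G : SimpleGraph V} {x y : V} {p : G.Walk x y}
    (h : p.edges.Nodup) : walkWeight F p = wtF F p.edges.toFinset := by
  unfold walkWeight wtF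
  rw [List.sum_toFinset _ h]

lemma distF_self (G : SimpleGraph V) (F : Set (Sym2 V)) (x : V) :
    distF G F x x = 0 := by
  have h : {w : ℤ | ∃ p : G.Walk x x, p.IsPath ∧ walkWeight F p = w} = {0} := by
    ext w
    simp only [Set.mem_setOf_eq, Set.mem_singleton_iff]
    constructor
    · rintro ⟨p, hp, rfl⟩
      rw [(SimpleGraph.Walk.isPath_iff_eq_nil (p := p)).1 hp]
      simp [walkWeight]
    · rintro rfl
      exact ⟨SimpleGraph.Walk.nil, SimpleGraph.Walk.IsPath.nil, by simp [walkWeight]⟩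
  rw [distF, h, csInf_singleton]

lemma distS_bddBelow (G : SimpleGraph V) (F : Set (Sym2 V)) (x y : V) :
    BddBelow {w : ℤ | ∃ p : G.Walk x y, p.IsPath ∧ walkWeight F p = w} := by
  refine ⟨-(Fintype.card (Sym2 V) : ℤ), ?_⟩
  rintro w ⟨p, hp, rfl⟩
  rw [walkWeight_eq_wtF F hp.isTrail.edges_nodup]
  have h1 : -((p.edges.toFinset.card : ℤ)) ≤ wtF F p.edges.toFinset := by
    unfold wtF
    calc -((p.edges.toFinset.card : ℤ)) = ∑ _e ∈ p.edges.toFinset, (-1 : ℤ) := by simp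
    _ ≤ ∑ e ∈ p.edges.toFinset, ew F e := by
        apply Finset.sum_le_sum
        intro e _
        unfold ew
        split <;> omega
  have h2 : (p.edges.toFinset.card : ℤ) ≤ (Fintype.card (Sym2 V) : ℤ) := by
    exact_mod_cast Finset.card_le_univ _
  omega

lemma reach_of_odd {G : SimpleGraph V} (B : Finset (Sym2 V))
    (hB : ∀ e ∈ B, e ∈ G.edgeSet) {x y : V} (hxy : x ≠ y)
    (hodd : ∀ v : V, (Odd ((B.filter (fun e => v ∈ e)).card) ↔ (v = x ∨ v = y))) :
    (SimpleGraph.fromEdgeSet (↑B : Set (Sym2 V))).Reachable x y := by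
  classical
  set H := SimpleGraph.fromEdgeSet (↑B : Set (Sym2 V)) with hH
  by_contra hnr
  set Cset := {u : V | H.Reachable x u} with hCset
  set B' := B.filter (fun e => ∀ u ∈ e, u ∈ Cset) with hB'
  set H' := SimpleGraph.fromEdgeSet (↑B' : Set (Sym2 V)) with hH'
  have hB'B : ∀ e ∈ B', e ∈ B := fun e he => (Finset.mem_filter.1 he).1
  -- edges of B containing a vertex of Cset are entirely in Cset
  have hfilter_eq : ∀ v ∈ Cset, B'.filter (fun e => v ∈ e) = B.filter (fun e => v ∈ e) := by
    intro v hv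
    ext e
    simp only [hB', Finset.filter_filter, Finset.mem_filter]
    constructor
    · rintro ⟨he, _, hve⟩; exact ⟨he, hve⟩
    · rintro ⟨he, hve⟩
      refine ⟨he, ?_, hve⟩
      induction e using Sym2.ind with
      | _ a b =>
        have hadj : G.Adj a b := (SimpleGraph.mem_edgeSet G).1 (hB _ he)
        have hHadj : H.Adj a b := by
          rw [hH, SimpleGraph.fromEdgeSet_adj]
          exact ⟨he, hadj.ne⟩
        have hab : a ∈ Cset ∨ b ∈ Cset := by
          rcases Sym2.mem_iff.1 hve with rfl | rfl
          · exact Or.inl hv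
          · exact Or.inr hv
        intro u hu
        rcases Sym2.mem_iff.1 hu with rfl | rfl
        · rcases hab with h | h
          · exact h
          · exact Set.mem_setOf.mpr ((Set.mem_setOf.mp h).trans hHadj.symm.reachable)
        · rcases hab with h | h
          · exact Set.mem_setOf.mpr ((Set.mem_setOf.mp h).trans hHadj.reachable)
          · exact h
  have hfilter_zero : ∀ v, v ∉ Cset → B'.filter (fun e => v ∈ e) = ∅ := by
    intro v hv
    rw [Finset.eq_empty_iff_forall_notMem]
    intro e he
    rcases Finset.mem_filter.1 he with ⟨he', hve⟩
    exact hv ((Finset.mem_filter.1 he').2 v hve)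
  -- degree of H' equals filter card
  have hdeg : ∀ v : V, H'.degree v = (B'.filter (fun e => v ∈ e)).card := by
    intro v
    rw [← SimpleGraph.card_incidenceFinset_eq_degree]
    congr 1
    ext e
    rw [SimpleGraph.mem_incidenceFinset]
    simp only [SimpleGraph.incidenceSet, Set.mem_setOf_eq, Finset.mem_filter]
    rw [hH', SimpleGraph.edgeSet_fromEdgeSet]
    constructor
    · rintro ⟨⟨he, _⟩, hve⟩
      exact ⟨he, hve⟩
    · rintro ⟨he, hve⟩
      exact ⟨⟨he, SimpleGraph.not_isDiag_of_mem_edgeSet G (hB e (hB'B e he))⟩, hve⟩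
  have hxC : x ∈ Cset := SimpleGraph.Reachable.refl x
  set S := Finset.univ.filter (fun v => Odd (H'.degree v)) with hS
  have heven : Even S.card := SimpleGraph.even_card_odd_degree_vertices H'
  have hsub : S ⊆ {x, y} := by
    intro v hv
    rw [hS, Finset.mem_filter] at hv
    have hv' := hv.2
    rw [hdeg] at hv'
    by_cases hvC : v ∈ Cset
    · rw [hfilter_eq v hvC] at hv'
      rcases (hodd v).1 hv' with rfl | rfl
      · exact Finset.mem_insert_self _ _
      · exact Finset.mem_insert_of_mem (Finset.mem_singleton_self _)
    · rw [hfilter_zero v hvC] at hv'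
      simp at hv'
  have hxS : x ∈ S := by
    rw [hS, Finset.mem_filter]
    refine ⟨Finset.mem_univ _, ?_⟩
    rw [hdeg, hfilter_eq x hxC]
    exact (hodd x).2 (Or.inl rfl)
  have hyS : y ∈ S := by
    by_contra hyS
    have : S = {x} := by
      apply Finset.Subset.antisymm
      · intro v hv
        rcases Finset.mem_insert.1 (hsub hv) with rfl | hv'
        · exact Finset.mem_singleton_self _
        · exact absurd (Finset.mem_singleton.1 hv' ▸ hv) hyS
      · intro v hv
        rw [Finset.mem_singleton.1 hv]
        exact hxS
    rw [this] at heven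
    simp at heven
  -- y has odd degree in H', so y is covered by B', hence y ∈ Cset
  rw [hS, Finset.mem_filter] at hyS
  have hy' := hyS.2
  rw [hdeg] at hy'
  by_cases hyC : y ∈ Cset
  · exact hnr hyC
  · rw [hfilter_zero y hyC] at hy'
    simp at hy'

lemma extract_path {G : SimpleGraph V} (B : Finset (Sym2 V))
    (hB : ∀ e ∈ B, e ∈ G.edgeSet) {x y : V} (hxy : x ≠ y)
    (hodd : ∀ v : V, (Odd ((B.filter (fun e => v ∈ e)).card) ↔ (v = x ∨ v = y))) :
    ∃ p : G.Walk x y, p.IsPath ∧ (∀ e ∈ p.edges, e ∈ B) ∧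
      ∀ v : V, Even (((B \ p.edges.toFinset).filter (fun e => v ∈ e)).card) := by
  classical
  have hreach := reach_of_odd B hB hxy hodd
  set H := SimpleGraph.fromEdgeSet (↑B : Set (Sym2 V)) with hH
  obtain ⟨w0⟩ := hreach
  set q0 := w0.toPath with hq0
  have hq0path : (q0 : H.Walk x y).IsPath := q0.2
  have hq0edges : ∀ e ∈ (q0 : H.Walk x y).edges, e ∈ G.edgeSet := by
    intro e he
    have := (q0 : H.Walk x y).edges_subset_edgeSet he
    rw [hH, SimpleGraph.edgeSet_fromEdgeSet] at this
    exact hB e this.1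
  set p := (q0 : H.Walk x y).transfer G hq0edges with hp
  have hppath : p.IsPath := hq0path.transfer hq0edges
  have hpe : p.edges = (q0 : H.Walk x y).edges := SimpleGraph.Walk.edges_transfer _ hq0edges
  have hpB : ∀ e ∈ p.edges, e ∈ B := by
    intro e he
    rw [hpe] at he
    have := (q0 : H.Walk x y).edges_subset_edgeSet he
    rw [hH, SimpleGraph.edgeSet_fromEdgeSet] at this
    exact this.1
  refine ⟨p, hppath, hpB, ?_⟩
  intro v
  have hsubset : p.edges.toFinset ⊆ B := by
    intro e he
    exact hpB e (List.mem_toFinset.1 he)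
  have hfsub : p.edges.toFinset.filter (fun e => v ∈ e) ⊆ B.filter (fun e => v ∈ e) :=
    Finset.filter_subset_filter _ hsubset
  have hsplit : (B \ p.edges.toFinset).filter (fun e => v ∈ e)
      = B.filter (fun e => v ∈ e) \ p.edges.toFinset.filter (fun e => v ∈ e) := by
    ext e
    simp only [Finset.mem_filter, Finset.mem_sdiff]
    tauto
  have hcard := Finset.card_sdiff_add_card_eq_card hfsub
  have hpodd := path_filter_odd hxy hppath.isTrail v
  have hBodd := hodd v
  rw [hsplit]
  by_cases hv : v = x ∨ v = y
  · have h1 := hpodd.2 hv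
    have h2 := hBodd.2 hv
    simp only [Nat.odd_iff, Nat.even_iff] at h1 h2 ⊢
    omega
  · have h1 : ¬ Odd ((p.edges.toFinset.filter (fun e => v ∈ e)).card) := fun h => hv (hpodd.1 h)
    have h2 : ¬ Odd ((B.filter (fun e => v ∈ e)).card) := fun h => hv (hBodd.1 h)
    simp only [Nat.odd_iff, Nat.even_iff] at h1 h2 ⊢
    omega

lemma distF_le_aux {G : SimpleGraph V} {T : Set V}
    {x y : V} (hxy : G.Reachable x y)
    {F₁ F₂ : Set (Sym2 V)} (h₁ : IsMinJoin G T F₁) (h₂ : IsMinJoin G T F₂) :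
    distF G F₁ x y ≤ distF G F₂ x y := by
  classical
  by_cases hxy' : x = y
  · subst hxy'
    rw [distF_self, distF_self]
  · -- the minimizing path for F₂
    set S₂ := {w : ℤ | ∃ p : G.Walk x y, p.IsPath ∧ walkWeight F₂ p = w} with hS₂
    have hne : S₂.Nonempty := by
      obtain ⟨w0⟩ := hxy
      exact ⟨_, (w0.toPath : G.Walk x y), w0.toPath.2, rfl⟩
    have hbdd := distS_bddBelow G F₂ x y
    have hmem : sInf S₂ ∈ S₂ := Int.csInf_mem hne hbdd
    obtain ⟨p, hp, hw⟩ := hmem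
    -- the symmetric difference D
    set D := F₁.toFinset ∆ F₂.toFinset with hD
    have hD_sub : ∀ e ∈ D, e ∈ G.edgeSet := by
      intro e he
      rcases Finset.mem_symmDiff.1 he with ⟨h, _⟩ | ⟨h, _⟩
      · exact h₁.1.1 (Set.mem_toFinset.1 h)
      · exact h₂.1.1 (Set.mem_toFinset.1 h)
    have hD_even : ∀ v : V, Even ((D.filter (fun e => v ∈ e)).card) := by
      intro v
      have j₁ := h₁.1.2 v
      have j₂ := h₂.1.2 v
      rw [ncard_sep_eq_s2] at j₁ j₂
      have hcs := card_symmDiff_aux (F₁.toFinset.filter (fun e => v ∈ e))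
        (F₂.toFinset.filter (fun e => v ∈ e))
      rw [hD, filter_symmDiff_aux]
      by_cases hT : v ∈ T
      · have o1 := j₁.2 hT
        have o2 := j₂.2 hT
        simp only [Nat.odd_iff, Nat.even_iff] at o1 o2 ⊢
        omega
      · have o1 : ¬ Odd ((F₁.toFinset.filter (fun e => v ∈ e)).card) := fun h => hT (j₁.1 h)
        have o2 : ¬ Odd ((F₂.toFinset.filter (fun e => v ∈ e)).card) := fun h => hT (j₂.1 h)
        simp only [Nat.odd_iff, Nat.even_iff] at o1 o2 ⊢
        omega
    have hflip : ∀ e ∈ D, ew F₁ e = - ew F₂ e := by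
      intro e he
      rcases Finset.mem_symmDiff.1 he with ⟨h, h'⟩ | ⟨h, h'⟩ <;>
        simp only [Set.mem_toFinset] at h h' <;> simp [ew, h, h']
    have hsame : ∀ e ∉ D, ew F₁ e = ew F₂ e := by
      intro e he
      rw [Finset.mem_symmDiff] at he
      push_neg at he
      by_cases h1 : e ∈ F₁
      · have h2 : e ∈ F₂ := Set.mem_toFinset.1 (he.1 (Set.mem_toFinset.2 h1))
        simp [ew, h1, h2]
      · have h2 : e ∉ F₂ := fun h2 => h1 (Set.mem_toFinset.1 (he.2 (Set.mem_toFinset.2 h2)))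
        simp [ew, h1, h2]
    have hD0 : wtF F₁ D = 0 := by
      have h12 : wtF F₁ D = - wtF F₂ D := by
        unfold wtF
        rw [← Finset.sum_neg_distrib]
        exact Finset.sum_congr rfl hflip
      have hA := wtF_even_nonneg h₁ D hD_sub hD_even
      have hB := wtF_even_nonneg h₂ D hD_sub hD_even
      omega
    -- B = A ∆ D
    set A := p.edges.toFinset with hA
    set B := A ∆ D with hBdef
    have hApath : ∀ v : V, (Odd ((A.filter (fun e => v ∈ e)).card) ↔ (v = x ∨ v = y)) :=
      fun v => path_filter_odd hxy' hp.isTrail v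
    have hB_sub : ∀ e ∈ B, e ∈ G.edgeSet := by
      intro e he
      rcases Finset.mem_symmDiff.1 he with ⟨h, _⟩ | ⟨h, _⟩
      · exact p.edges_subset_edgeSet (List.mem_toFinset.1 h)
      · exact hD_sub e h
    have hB_odd : ∀ v : V, (Odd ((B.filter (fun e => v ∈ e)).card) ↔ (v = x ∨ v = y)) := by
      intro v
      rw [hBdef, filter_symmDiff_aux]
      have hcs := card_symmDiff_aux (A.filter (fun e => v ∈ e)) (D.filter (fun e => v ∈ e))
      have h4 := hD_even v
      rw [← hApath v]
      simp only [Nat.odd_iff, Nat.even_iff] at h4 ⊢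
      omega
    obtain ⟨q, hq, hqB, hqEven⟩ := extract_path B hB_sub hxy' hB_odd
    -- weight chain
    set Q := q.edges.toFinset with hQ
    have hQsub : Q ⊆ B := fun e he => hqB e (List.mem_toFinset.1 he)
    have hsplit : wtF F₁ B = wtF F₁ (B \ Q) + wtF F₁ Q := by
      unfold wtF
      exact (Finset.sum_sdiff hQsub).symm
    have hpos : 0 ≤ wtF F₁ (B \ Q) :=
      wtF_even_nonneg h₁ (B \ Q) (fun e he => hB_sub e (Finset.mem_sdiff.1 he).1) hqEven
    have hL7 : wtF F₁ B = wtF F₂ A + wtF F₁ D := wtF_symmDiff F₁ F₂ A D hflip hsame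
    have hkey : wtF F₁ Q ≤ wtF F₂ A := by omega
    have hq_weight : walkWeight F₁ q = wtF F₁ Q := walkWeight_eq_wtF F₁ hq.isTrail.edges_nodup
    have hp_weight : walkWeight F₂ p = wtF F₂ A := walkWeight_eq_wtF F₂ hp.isTrail.edges_nodup
    have hle1 : distF G F₁ x y ≤ walkWeight F₁ q :=
      csInf_le (distS_bddBelow G F₁ x y) ⟨q, hq, rfl⟩
    have : distF G F₂ x y = walkWeight F₂ p := by
      rw [distF, ← hw]
    omega

/-- the `F`-distance between two vertices of the same connected component
does not depend on the choice of the minimum join `F`. -/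
theorem stmt_2 (G : SimpleGraph V) (T : Set V) (hG : IsGraft G T)
    (x y : V) (hxy : G.Reachable x y)
    (F₁ F₂ : Set (Sym2 V)) (h₁ : IsMinJoin G T F₁) (h₂ : IsMinJoin G T F₂) :
    distF G F₁ x y = distF G F₂ x y :=
  le_antisymm (distF_le_aux hxy h₁ h₂) (distF_le_aux hxy h₂ h₁)
end

section
/- Let (G, T) be a factor-critical graft with root r, i.e., G is a factor-critical graph and T = V(G) ∖ {r}. Then every minimum join of (G, T) is a matching of G that covers every vertex of G except r. -/
open SimpleGraph
open scoped Classical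

variable {V : Type*} [Fintype V] [DecidableEq V]

/-- `F` is a matching: its edges are pairwise disjoint. -/
def IsMatchingSet (F : Set (Sym2 V)) : Prop :=
  ∀ e ∈ F, ∀ e' ∈ F, e ≠ e' → ∀ v : V, v ∈ e → v ∉ e'

set_option linter.unusedSectionVars false

lemma filter_mem_edge (e : Sym2 V) (he : ¬ e.IsDiag) :
    (Finset.univ.filter (fun v : V => v ∈ e)).card = 2 := by
  induction e with
  | _ a b =>
    have hab : a ≠ b := by simpa using he
    have : (Finset.univ.filter (fun v : V => v ∈ s(a, b))) = {a, b} := by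
      ext v; simp [Sym2.mem_iff]
    rw [this, Finset.card_insert_of_notMem (by simp [hab]), Finset.card_singleton]

lemma deg_sum (F : Set (Sym2 V)) (hF : ∀ e ∈ F, ¬ e.IsDiag) :
    ∑ v : V, {e ∈ F | v ∈ e}.ncard = 2 * F.ncard := by
  classical
  have h1 : ∀ v : V, {e ∈ F | v ∈ e}.ncard = (F.toFinset.filter (fun e => v ∈ e)).card := by
    intro v
    rw [Set.ncard_eq_toFinset_card']
    congr 1
    ext e; simp
  simp_rw [h1, Finset.card_filter]
  rw [Finset.sum_comm]
  have h3 : ∀ e ∈ F.toFinset, (∑ v : V, if v ∈ e then 1 else 0) = 2 := by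
    intro e he
    rw [← Finset.card_filter]
    exact filter_mem_edge e (hF e (by simpa using he))
  rw [Finset.sum_congr rfl h3, Finset.sum_const, smul_eq_mul,
    Set.ncard_eq_toFinset_card', mul_comm]

lemma matching_deg_one {G : SimpleGraph V} {M : G.Subgraph} (hM : M.IsMatching)
    {v : V} (hv : v ∈ M.verts) : {e ∈ M.edgeSet | v ∈ e}.ncard = 1 := by
  obtain ⟨w, hw, hwu⟩ := hM hv
  have : {e ∈ M.edgeSet | v ∈ e} = {s(v, w)} := by
    ext e
    simp only [Set.mem_setOf_eq, Set.mem_singleton_iff]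
    constructor
    · rintro ⟨heM, hve⟩
      obtain ⟨u, rfl⟩ := Sym2.mem_iff_exists.mp hve
      rw [Subgraph.mem_edgeSet] at heM
      rw [hwu u heM]
    · rintro rfl
      exact ⟨Subgraph.mem_edgeSet.mpr hw, Sym2.mem_mk_left v w⟩
  rw [this, Set.ncard_singleton]

lemma matching_deg_zero {G : SimpleGraph V} {M : G.Subgraph}
    {v : V} (hv : v ∉ M.verts) : {e ∈ M.edgeSet | v ∈ e}.ncard = 0 := by
  have : {e ∈ M.edgeSet | v ∈ e} = ∅ := by
    ext e
    simp only [Set.mem_setOf_eq, Set.mem_empty_iff_false, iff_false, not_and]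
    intro he hve
    exact hv (Subgraph.mem_verts_of_mem_edge he hve)
  simp [this]


/-- every minimum join of a factor-critical graft `(G, V(G) ∖ {r})` with
root `r` is a matching covering every vertex of `G` except `r`. -/
theorem stmt_5 (G : SimpleGraph V) (T : Set V) (r : V)
    (hfc : ∀ v : V, ∃ M : G.Subgraph, M.IsMatching ∧ M.verts = {v}ᶜ)
    (hT : T = ({r}ᶜ : Set V)) (hG : IsGraft G T)
    (F : Set (Sym2 V)) (hF : IsMinJoin G T F) :
    IsMatchingSet F ∧ (∀ v : V, v ≠ r → Covers F v) ∧ ¬Covers F r := by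

  subst hT
  classical
  obtain ⟨M, hM, hMv⟩ := hfc r
  set F' : Set (Sym2 V) := M.edgeSet with hF'def
  have hrM : r ∉ M.verts := by rw [hMv]; simp
  have hd' : ∀ v : V, v ≠ r → {e ∈ F' | v ∈ e}.ncard = 1 := fun v hv =>
    matching_deg_one hM (by rw [hMv]; simpa using hv)
  have hd'r : {e ∈ F' | r ∈ e}.ncard = 0 := matching_deg_zero hrM
  have hJ' : IsJoin G ({r}ᶜ : Set V) F' := by
    refine ⟨M.edgeSet_subset, fun v => ?_⟩
    by_cases hv : v = r
    · subst hv; simp [hd'r]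
    · simp [hd' v hv, hv]
  have hle : F.ncard ≤ F'.ncard := hF.2 F' hJ'
  set d : V → ℕ := fun v => {e ∈ F | v ∈ e}.ncard with hd_def
  have hodd : ∀ v : V, Odd (d v) ↔ v ≠ r := by
    intro v
    simpa using hF.1.2 v
  have hnd : ∀ e ∈ F, ¬ e.IsDiag := fun e he =>
    (G.not_isDiag_of_mem_edgeSet (hF.1.1 he))
  have hnd' : ∀ e ∈ F', ¬ e.IsDiag := fun e he =>
    (G.not_isDiag_of_mem_edgeSet (M.edgeSet_subset he))
  have hsum : ∑ v : V, d v = 2 * F.ncard := deg_sum F hnd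
  have hsum' : ∑ v : V, {e ∈ F' | v ∈ e}.ncard = 2 * F'.ncard := deg_sum F' hnd'
  set m : ℕ := (Finset.univ.erase r).card with hm_def
  have hsum'val : ∑ v : V, {e ∈ F' | v ∈ e}.ncard = m := by
    rw [← Finset.sum_erase_add _ _ (Finset.mem_univ r), hd'r, add_zero]
    rw [Finset.sum_congr rfl (fun v hv => hd' v (Finset.ne_of_mem_erase hv))]
    simp [hm_def]
  have htot : ∑ v : V, d v ≤ m := by
    rw [hsum, ← hsum'val, hsum']
    omega
  have hsplit : ∑ v ∈ Finset.univ.erase r, d v + d r = ∑ v : V, d v :=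
    Finset.sum_erase_add _ _ (Finset.mem_univ r)
  have hge1 : ∀ v ∈ Finset.univ.erase r, 1 ≤ d v := by
    intro v hv
    have := (hodd v).mpr (Finset.ne_of_mem_erase hv)
    exact Nat.one_le_iff_ne_zero.mpr (by rintro h; rw [h] at this; simp at this)
  have hlow : m ≤ ∑ v ∈ Finset.univ.erase r, d v := by
    have := Finset.card_nsmul_le_sum (Finset.univ.erase r) d 1 hge1
    simpa only [smul_eq_mul, mul_one] using this
  have hdr : d r = 0 := by omega
  have hone : ∀ v : V, v ≠ r → d v = 1 := by
    intro v hv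
    have hvmem : v ∈ Finset.univ.erase r := Finset.mem_erase.mpr ⟨hv, Finset.mem_univ v⟩
    have h1 : ∑ u ∈ (Finset.univ.erase r).erase v, d u + d v
        = ∑ u ∈ Finset.univ.erase r, d u := Finset.sum_erase_add _ _ hvmem
    have h2 : ((Finset.univ.erase r).erase v).card ≤ ∑ u ∈ (Finset.univ.erase r).erase v, d u := by
      have := Finset.card_nsmul_le_sum ((Finset.univ.erase r).erase v) d 1
        (fun u hu => hge1 u (Finset.mem_of_mem_erase hu))
      simpa only [smul_eq_mul, mul_one] using this
    have h3 : ((Finset.univ.erase r).erase v).card = m - 1 := by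
      rw [Finset.card_erase_of_mem hvmem]
    have h4 : 1 ≤ m := by
      have := Finset.card_pos.mpr ⟨v, hvmem⟩; omega
    have := hge1 v hvmem
    omega
  have hdle1 : ∀ v : V, d v ≤ 1 := by
    intro v
    by_cases hv : v = r
    · subst hv; omega
    · rw [hone v hv]
  refine ⟨?_, ?_, ?_⟩
  · intro e he e' he' hne v hv hv'
    have h2 : 1 < {x ∈ F | v ∈ x}.ncard :=
      (Set.one_lt_ncard_iff (Set.toFinite _)).mpr ⟨e, e', ⟨he, hv⟩, ⟨he', hv'⟩, hne⟩
    have h3 : d v = {x ∈ F | v ∈ x}.ncard := by simp only [hd_def]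
    have := hdle1 v
    omega
  · intro v hv
    have h1 : d v = 1 := hone v hv
    have h2 : {x ∈ F | v ∈ x}.ncard = 1 := by simpa only [hd_def] using h1
    obtain ⟨e, he⟩ := Set.nonempty_of_ncard_ne_zero (s := {x ∈ F | v ∈ x}) (by omega)
    exact ⟨e, he.1, he.2⟩
  · rintro ⟨e, he, hre⟩
    have h2 : {x ∈ F | r ∈ x}.ncard = 0 := by simpa only [hd_def] using hdr
    have h3 : {x ∈ F | r ∈ x} = ∅ := (Set.ncard_eq_zero (Set.toFinite _)).mp h2
    have : e ∈ ({x ∈ F | r ∈ x} : Set (Sym2 V)) := ⟨he, hre⟩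
    rw [h3] at this
    exact this
end

section
/- Let (G, T) be a rake with head r and tooth set B. Then the set E_G[r, B] of edges between r and B is a connected minimum join of (G, T), and (G, T) is a strong comb with respect to r with tooth set B. -/
open SimpleGraph
open scoped Classical

variable {V : Type*} [Fintype V] [DecidableEq V]

/-- `(G, T)` is a rake with head `r` and tooth set `B`. -/
def IsRake (G : SimpleGraph V) (T : Set V) (r : V) (B : Set V) : Prop :=
  B ⊆ T ∧
  (∀ x ∈ B, ∀ y ∈ B, ¬G.Adj x y) ∧
  (∀ v : V, v ∉ B → ∃ b ∈ B, G.Adj v b) ∧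
  r ∉ B ∧ (∀ b ∈ B, G.Adj r b) ∧
  (Odd B.ncard → T = B ∪ {r}) ∧ (¬Odd B.ncard → T = B)

/-- `(G, T)` is a strong comb with respect to `r` with tooth set `B`. -/
def IsStrongComb (G : SimpleGraph V) (T : Set V) (r : V) (B : Set V) : Prop :=
  (∀ x ∈ B, ∀ y ∈ B, ¬G.Adj x y) ∧
  (∀ v : V, v ∉ B → ∃ b ∈ B, G.Adj v b) ∧
  r ∉ B ∧
  ∀ F : Set (Sym2 V), IsMinJoin G T F →
    (∀ x ∈ B, distF G F r x = -1) ∧ (∀ x : V, x ∉ B → distF G F r x = 0)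

lemma adj_of_mem_edge {G : SimpleGraph V} {e : Sym2 V} (he : e ∈ G.edgeSet)
    {a b : V} (ha : a ∈ e) (hb : b ∈ e) (hab : a ≠ b) : G.Adj a b := by
  induction e using Sym2.ind with
  | _ u w =>
    rw [Sym2.mem_iff] at ha hb
    rw [SimpleGraph.mem_edgeSet] at he
    rcases ha with rfl | rfl <;> rcases hb with rfl | rfl
    · exact absurd rfl hab
    · exact he
    · exact he.symm
    · exact absurd rfl hab

lemma join_card_lb {G : SimpleGraph V} {T B : Set V} {F : Set (Sym2 V)}
    (hBT : B ⊆ T) (hstab : ∀ x ∈ B, ∀ y ∈ B, ¬G.Adj x y)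
    (hF : IsJoin G T F) : B.ncard ≤ F.ncard := by
  have hex : ∀ b : V, ∃ e : Sym2 V, b ∈ B → e ∈ F ∧ b ∈ e := by
    intro b
    by_cases hb : b ∈ B
    · have hodd := (hF.2 b).mpr (hBT hb)
      have hne : {e ∈ F | b ∈ e}.Nonempty := by
        rw [Set.nonempty_iff_ne_empty]
        intro h
        rw [h, Set.ncard_empty] at hodd
        simp [Nat.odd_iff] at hodd
      obtain ⟨e, he1, he2⟩ := hne
      exact ⟨e, fun _ => ⟨he1, he2⟩⟩
    · exact ⟨s(b, b), fun h => absurd h hb⟩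
  choose f hf using hex
  refine Set.ncard_le_ncard_of_injOn f (fun b hb => (hf b hb).1) ?_ (Set.toFinite F)
  intro b hb b' hb' heq
  by_contra hne
  exact hstab b hb b' hb'
    (adj_of_mem_edge (hF.1 (hf b hb).1) (hf b hb).2 (heq.symm ▸ (hf b' hb').2) hne)

lemma minjoin_struct {G : SimpleGraph V} {T B : Set V} {F : Set (Sym2 V)}
    (hBT : B ⊆ T) (hstab : ∀ x ∈ B, ∀ y ∈ B, ¬G.Adj x y)
    (hF : IsJoin G T F) (hcard : F.ncard ≤ B.ncard) :
    (∀ e ∈ F, ∃ b ∈ B, b ∈ e) ∧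
    (∀ e ∈ F, ∀ e' ∈ F, ∀ b ∈ B, b ∈ e → b ∈ e' → e = e') := by
  have hex : ∀ b : V, ∃ e : Sym2 V, b ∈ B → e ∈ F ∧ b ∈ e := by
    intro b
    by_cases hb : b ∈ B
    · have hodd := (hF.2 b).mpr (hBT hb)
      have hne : {e ∈ F | b ∈ e}.Nonempty := by
        rw [Set.nonempty_iff_ne_empty]
        intro h
        rw [h, Set.ncard_empty] at hodd
        simp [Nat.odd_iff] at hodd
      obtain ⟨e, he1, he2⟩ := hne
      exact ⟨e, fun _ => ⟨he1, he2⟩⟩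
    · exact ⟨s(b, b), fun h => absurd h hb⟩
  choose f hf using hex
  have hmap : ∀ b ∈ B, f b ∈ F := fun b hb => (hf b hb).1
  have hmem : ∀ b ∈ B, b ∈ f b := fun b hb => (hf b hb).2
  have hinj : Set.InjOn f B := by
    intro b hb b' hb' heq
    by_contra hne
    exact hstab b hb b' hb'
      (adj_of_mem_edge (hF.1 (hmap b hb)) (hmem b hb) (heq.symm ▸ hmem b' hb') hne)
  have himg : f '' B = F :=
    Set.eq_of_subset_of_ncard_le (by rintro e ⟨b, hb, rfl⟩; exact hmap b hb)
      (by rw [Set.ncard_image_of_injOn hinj]; exact hcard) (Set.toFinite F)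
  have huniq : ∀ e ∈ F, ∀ b ∈ B, b ∈ e → e = f b := by
    intro e heF b hb hbe
    rw [← himg] at heF
    obtain ⟨c, hc, rfl⟩ := heF
    by_cases hcb : c = b
    · rw [hcb]
    · exact absurd (adj_of_mem_edge (hF.1 (hmap c hc)) (hmem c hc) hbe hcb)
        (hstab c hc b hb)
  constructor
  · intro e heF
    rw [← himg] at heF
    obtain ⟨b, hb, rfl⟩ := heF
    exact ⟨b, hb, hmem b hb⟩
  · intro e he e' he' b hb hbe hbe'
    rw [huniq e he b hb hbe, huniq e' he' b hb hbe']

noncomputable def bi (B : Set V) (x : V) : ℤ := if x ∈ B then 1 else 0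

lemma walkWeight_nil {G : SimpleGraph V} {a : V} (F : Set (Sym2 V)) :
    walkWeight F (SimpleGraph.Walk.nil : G.Walk a a) = 0 := by
  simp [walkWeight]

lemma walkWeight_cons {G : SimpleGraph V} {a b c : V} (F : Set (Sym2 V))
    (h : G.Adj a b) (p : G.Walk b c) :
    walkWeight F (SimpleGraph.Walk.cons h p) = ew F s(a, b) + walkWeight F p := by
  simp [walkWeight]

lemma ew_mem {F : Set (Sym2 V)} {e : Sym2 V} (h : e ∈ F) : ew F e = -1 := if_pos h
lemma ew_not_mem {F : Set (Sym2 V)} {e : Sym2 V} (h : e ∉ F) : ew F e = 1 := if_neg h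

lemma walk_weight_lb {G : SimpleGraph V} {B : Set V} {F : Set (Sym2 V)}
    (hstab : ∀ x ∈ B, ∀ y ∈ B, ¬G.Adj x y)
    (hFB : ∀ e ∈ F, ∃ b ∈ B, b ∈ e)
    (hP2 : ∀ e ∈ F, ∀ e' ∈ F, ∀ b ∈ B, b ∈ e → b ∈ e' → e = e')
    {a x : V} (p : G.Walk a x) (hnd : p.edges.Nodup) :
    (-1 - bi B x ≤ walkWeight F p) ∧
    (a ∉ B → -bi B x ≤ walkWeight F p) ∧
    (a ∈ B → (∀ e ∈ p.edges.head?, e ∉ F) → 1 - bi B x ≤ walkWeight F p) := by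
  induction p with
  | nil =>
    rename_i u
    rw [walkWeight_nil]
    unfold bi
    by_cases h : u ∈ B
    · rw [if_pos h]
      exact ⟨by norm_num, fun hc => absurd h hc, fun _ _ => by norm_num⟩
    · rw [if_neg h]
      exact ⟨by norm_num, fun _ => by norm_num, fun hc _ => absurd hc h⟩
  | cons huv q ih =>
    rename_i u v w
    rw [SimpleGraph.Walk.edges_cons, List.nodup_cons] at hnd
    obtain ⟨hnotin, hndq⟩ := hnd
    obtain ⟨ih1, ih2, ih3⟩ := ih hndq
    rw [walkWeight_cons]
    by_cases hin : s(u, v) ∈ F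
    · rw [ew_mem hin]
      by_cases huB : u ∈ B
      · have hvB : v ∉ B := fun hv => hstab u huB v hv huv
        have h2 := ih2 hvB
        refine ⟨by linarith, fun hc => absurd huB hc, fun _ hc => ?_⟩
        exact absurd hin (hc s(u, v) (by simp [SimpleGraph.Walk.edges_cons]))
      · have hvB : v ∈ B := by
          obtain ⟨b, hbB, hbe⟩ := hFB _ hin
          rw [Sym2.mem_iff] at hbe
          rcases hbe with rfl | rfl
          · exact absurd hbB huB
          · exact hbB
        have hq3 : ∀ e ∈ q.edges.head?, e ∉ F := by
          intro e he hef
          have hemem : e ∈ q.edges := List.mem_of_mem_head? he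
          have hveq : v ∈ e := by
            cases q with
            | nil => simp at he
            | cons h' q' =>
              simp only [SimpleGraph.Walk.edges_cons, List.head?_cons,
                Option.mem_def, Option.some.injEq] at he
              rw [← he]
              simp
          have heq : s(u, v) = e := hP2 _ hin _ hef v hvB (by simp) hveq
          rw [← heq] at hemem
          exact hnotin hemem
        have h3 := ih3 hvB hq3
        exact ⟨by linarith, fun _ => by linarith, fun hc _ => absurd hc huB⟩
    · rw [ew_not_mem hin]
      refine ⟨by linarith, fun _ => by linarith, ?_⟩
      intro huB _
      have hvB : v ∉ B := fun hv => hstab u huB v hv huv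
      have h2 := ih2 hvB
      linarith

lemma distF_eq_of {G : SimpleGraph V} {F : Set (Sym2 V)} {x y : V} {m : ℤ}
    (hmem : ∃ p : G.Walk x y, p.IsPath ∧ walkWeight F p = m)
    (hlb : ∀ p : G.Walk x y, p.IsPath → m ≤ walkWeight F p) :
    distF G F x y = m := by
  obtain ⟨p, hp, hw⟩ := hmem
  have hm : m ∈ {w : ℤ | ∃ p : G.Walk x y, p.IsPath ∧ walkWeight F p = w} := ⟨p, hp, hw⟩
  have hbdd : BddBelow {w : ℤ | ∃ p : G.Walk x y, p.IsPath ∧ walkWeight F p = w} := by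
    refine ⟨m, ?_⟩
    rintro w ⟨q, hq, rfl⟩
    exact hlb q hq
  exact le_antisymm (csInf_le hbdd hm)
    (le_csInf ⟨m, hm⟩ (by rintro w ⟨q, hq, rfl⟩; exact hlb q hq))

lemma isPath_c1 {G : SimpleGraph V} {a b : V} (h : G.Adj a b) :
    (SimpleGraph.Walk.cons h SimpleGraph.Walk.nil).IsPath := by
  simp [SimpleGraph.Walk.isPath_def, h.ne]

lemma isPath_c2 {G : SimpleGraph V} {a b c : V} (h1 : G.Adj a b) (h2 : G.Adj b c)
    (hac : a ≠ c) :
    (SimpleGraph.Walk.cons h1 (SimpleGraph.Walk.cons h2 SimpleGraph.Walk.nil)).IsPath := by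
  simp [SimpleGraph.Walk.isPath_def, h1.ne, h2.ne, hac]

lemma isPath_c3 {G : SimpleGraph V} {a b c d : V} (h1 : G.Adj a b) (h2 : G.Adj b c)
    (h3 : G.Adj c d) (hac : a ≠ c) (had : a ≠ d) (hbd : b ≠ d) :
    (SimpleGraph.Walk.cons h1 (SimpleGraph.Walk.cons h2
      (SimpleGraph.Walk.cons h3 SimpleGraph.Walk.nil))).IsPath := by
  simp [SimpleGraph.Walk.isPath_def, h1.ne, h2.ne, h3.ne, hac, had, hbd]

lemma isPath_c4 {G : SimpleGraph V} {a b c d e : V} (h1 : G.Adj a b) (h2 : G.Adj b c)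
    (h3 : G.Adj c d) (h4 : G.Adj d e) (hac : a ≠ c) (had : a ≠ d) (hae : a ≠ e)
    (hbd : b ≠ d) (hbe : b ≠ e) (hce : c ≠ e) :
    (SimpleGraph.Walk.cons h1 (SimpleGraph.Walk.cons h2 (SimpleGraph.Walk.cons h3
      (SimpleGraph.Walk.cons h4 SimpleGraph.Walk.nil)))).IsPath := by
  simp [SimpleGraph.Walk.isPath_def, h1.ne, h2.ne, h3.ne, h4.ne, hac, had, hae, hbd, hbe, hce]

/-- if `(G, T)` is a rake with head `r` and tooth set `B`, then the set of
edges between `r` and `B` is a connected minimum join of `(G, T)`, and `(G, T)` is a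
strong comb with respect to `r` with tooth set `B`. -/
theorem stmt_8 (G : SimpleGraph V) (T : Set V) (r : V) (B : Set V)
    (hG : IsGraft G T) (hrake : IsRake G T r B) :
    IsMinJoin G T {e ∈ G.edgeSet | ∃ b ∈ B, e = s(r, b)} ∧
    ConnectedEdgeSet {e ∈ G.edgeSet | ∃ b ∈ B, e = s(r, b)} ∧
    IsStrongComb G T r B := by
  obtain ⟨hBT, hstab, hdom, hrB, hadj, hodd, heven⟩ := hrake
  set F₀ : Set (Sym2 V) := {e ∈ G.edgeSet | ∃ b ∈ B, e = s(r, b)} with hF₀def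
  have hmemF₀ : ∀ e : Sym2 V, e ∈ F₀ ↔ ∃ b ∈ B, e = s(r, b) := by
    intro e
    constructor
    · exact fun h => h.2
    · rintro ⟨b, hb, rfl⟩
      exact ⟨G.mem_edgeSet.mpr (hadj b hb), b, hb, rfl⟩
  have hTsub : T ⊆ B ∪ {r} := by
    by_cases h : Odd B.ncard
    · rw [hodd h]
    · rw [heven h]; exact Set.subset_union_left
  have hrT : r ∈ T ↔ Odd B.ncard := by
    constructor
    · intro hr; by_contra h; rw [heven h] at hr; exact hrB hr
    · intro h; rw [hodd h]; exact Set.mem_union_right _ rfl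
  have hnotT : ∀ v : V, v ∉ B → v ≠ r → v ∉ T := by
    intro v hvB hvr hvT
    rcases hTsub hvT with h | h
    · exact hvB h
    · exact hvr h
  have hinj0 : Set.InjOn (fun b => s(r, b)) B := by
    intro b hb b' hb' hE
    simp only [Sym2.eq_iff] at hE
    rcases hE with ⟨-, h2⟩ | ⟨h1, h2⟩
    · exact h2
    · subst h2; exact absurd hb hrB
  have hF₀img : F₀ = (fun b => s(r, b)) '' B := by
    ext e
    rw [hmemF₀]
    simp only [Set.mem_image]
    constructor
    · rintro ⟨b, hb, rfl⟩; exact ⟨b, hb, rfl⟩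
    · rintro ⟨b, hb, rfl⟩; exact ⟨b, hb, rfl⟩
  have hF₀card : F₀.ncard = B.ncard := by
    rw [hF₀img, Set.ncard_image_of_injOn hinj0]
  have hjoin : IsJoin G T F₀ := by
    constructor
    · exact fun e he => he.1
    · intro v
      by_cases hvB : v ∈ B
      · have hset : {e ∈ F₀ | v ∈ e} = {s(r, v)} := by
          ext e
          simp only [Set.mem_setOf_eq, Set.mem_singleton_iff, hmemF₀]
          constructor
          · rintro ⟨⟨b, hb, rfl⟩, hv⟩
            rw [Sym2.mem_iff] at hv
            rcases hv with rfl | rfl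
            · exact absurd hvB hrB
            · rfl
          · rintro rfl
            exact ⟨⟨v, hvB, rfl⟩, by simp⟩
        rw [hset, Set.ncard_singleton]
        simp [hBT hvB]
      · by_cases hvr : v = r
        · subst hvr
          have hset : {e ∈ F₀ | v ∈ e} = F₀ := by
            ext e
            simp only [Set.mem_setOf_eq, and_iff_left_iff_imp]
            intro he
            obtain ⟨b, hb, rfl⟩ := (hmemF₀ e).mp he
            simp
          rw [hset, hF₀card]
          exact hrT.symm
        · have hset : {e ∈ F₀ | v ∈ e} = ∅ := by
            ext e
            simp only [Set.mem_setOf_eq, Set.mem_empty_iff_false, iff_false, not_and]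
            intro he hv
            obtain ⟨b, hb, rfl⟩ := (hmemF₀ e).mp he
            rw [Sym2.mem_iff] at hv
            rcases hv with rfl | rfl
            · exact hvr rfl
            · exact hvB hb
          rw [hset, Set.ncard_empty]
          constructor
          · intro h; simp [Nat.odd_iff] at h
          · intro h; exact absurd h (hnotT v hvB hvr)
  have hmin : IsMinJoin G T F₀ :=
    ⟨hjoin, fun F' hF' => by rw [hF₀card]; exact join_card_lb hBT hstab hF'⟩
  obtain ⟨b₀, hb₀B, -⟩ := hdom r hrB
  have hconn : ConnectedEdgeSet F₀ := by
    refine ⟨⟨s(r, b₀), (hmemF₀ _).mpr ⟨b₀, hb₀B, rfl⟩⟩, ?_⟩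
    have hreach : ∀ x : V, Covers F₀ x → (SimpleGraph.fromEdgeSet F₀).Reachable r x := by
      rintro x ⟨e, he, hx⟩
      obtain ⟨b, hb, rfl⟩ := (hmemF₀ e).mp he
      rw [Sym2.mem_iff] at hx
      rcases hx with rfl | rfl
      · exact SimpleGraph.Reachable.refl _
      · refine SimpleGraph.Adj.reachable ?_
        rw [SimpleGraph.fromEdgeSet_adj]
        exact ⟨(hmemF₀ _).mpr ⟨x, hb, rfl⟩, fun h => hrB (h ▸ hb)⟩
    intro x y hx hy
    exact (hreach x hx).symm.trans (hreach y hy)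
  refine ⟨hmin, hconn, hstab, hdom, hrB, ?_⟩
  intro F hF
  obtain ⟨hFjoin, hFmin⟩ := hF
  have hFE : F ⊆ G.edgeSet := hFjoin.1
  have hFcard : F.ncard ≤ B.ncard := by rw [← hF₀card]; exact hFmin F₀ hjoin
  obtain ⟨hFB, hP2⟩ := minjoin_struct hBT hstab hFjoin hFcard
  have hother : ∀ e ∈ F, ∀ v : V, v ∈ e → v ∉ B → v ≠ r → ∃ e' ∈ F, e' ≠ e ∧ v ∈ e' := by
    intro e he v hv hvB hvr
    by_contra hcon
    push_neg at hcon
    have hsingle : {e' ∈ F | v ∈ e'} = {e} := by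
      ext e'
      simp only [Set.mem_setOf_eq, Set.mem_singleton_iff]
      constructor
      · rintro ⟨hf, hvm⟩
        by_contra hne
        exact hcon e' hf hne hvm
      · rintro rfl
        exact ⟨he, hv⟩
    have hvT := (hFjoin.2 v).mp (by rw [hsingle, Set.ncard_singleton]; exact odd_one)
    exact hnotT v hvB hvr hvT
  have hbedge : ∀ b ∈ B, ∃ e ∈ F, ∃ v : V, e = s(b, v) ∧ v ∉ B ∧ G.Adj b v ∧
      (∀ e' ∈ F, b ∈ e' → e' = e) := by
    intro b hb
    have hoddb := (hFjoin.2 b).mpr (hBT hb)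
    have hne : {e ∈ F | b ∈ e}.Nonempty := by
      rw [Set.nonempty_iff_ne_empty]
      intro h
      rw [h, Set.ncard_empty] at hoddb
      simp [Nat.odd_iff] at hoddb
    obtain ⟨e, heF, hbe⟩ := hne
    have hspec := Sym2.other_spec hbe
    have hadjbv : G.Adj b (Sym2.Mem.other hbe) := by
      rw [← SimpleGraph.mem_edgeSet, hspec]
      exact hFE heF
    exact ⟨e, heF, Sym2.Mem.other hbe, hspec.symm,
      fun hvB => hstab b hb _ hvB hadjbv, hadjbv,
      fun e' he' hbe' => hP2 e' he' e heF b hb hbe' hbe⟩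
  have hlb : ∀ (x : V) (p : G.Walk r x), p.IsPath → -(bi B x) ≤ walkWeight F p :=
    fun x p hp => (walk_weight_lb hstab hFB hP2 p hp.edges_nodup).2.1 hrB
  constructor
  · -- x ∈ B : distF = -1
    intro x hx
    have hxr : x ≠ r := fun h => hrB (h ▸ hx)
    refine distF_eq_of ?_ ?_
    · obtain ⟨e, heF, v, hev, hvB, hadjxv, huniq⟩ := hbedge x hx
      by_cases hvr : v = r
      · have hadjrx : G.Adj r x := (hvr ▸ hadjxv).symm
        have hmemrx : s(r, x) ∈ F := by
          rw [Sym2.eq_swap, ← hvr, ← hev]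
          exact heF
        refine ⟨SimpleGraph.Walk.cons hadjrx SimpleGraph.Walk.nil, isPath_c1 _, ?_⟩
        rw [walkWeight_cons, walkWeight_nil, ew_mem hmemrx]
        ring
      · obtain ⟨e', he'F, he'ne, hve'⟩ := hother e heF v (by rw [hev]; simp) hvB hvr
        obtain ⟨y, hyB, hye'⟩ := hFB e' he'F
        have hyv : y ≠ v := fun h => hvB (h ▸ hyB)
        have he'eq : e' = s(y, v) := ((Sym2.mem_and_mem_iff hyv).mp ⟨hye', hve'⟩)
        have hyx : y ≠ x := by
          intro h
          subst h
          exact he'ne (huniq e' he'F hye')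
        have hry : s(r, y) ∉ F := by
          intro hmem
          have h1 : s(r, y) = e' := hP2 _ hmem _ he'F y hyB (by simp) hye'
          rw [he'eq, Sym2.eq_iff] at h1
          rcases h1 with ⟨h, -⟩ | ⟨h, -⟩
          · exact hrB (h ▸ hyB)
          · exact hvr h.symm
        have hyvF : s(y, v) ∈ F := he'eq ▸ he'F
        have hvxF : s(v, x) ∈ F := by
          rw [Sym2.eq_swap, ← hev]
          exact heF
        have hadjry : G.Adj r y := hadj y hyB
        have hadjyv : G.Adj y v := G.mem_edgeSet.mp (hFE hyvF)
        have hryB : r ≠ y := fun h => hrB (h ▸ hyB)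
        have hrv : r ≠ v := fun h => hvr h.symm
        have hvx : v ≠ x := fun h => hvB (h ▸ hx)
        refine ⟨SimpleGraph.Walk.cons hadjry (SimpleGraph.Walk.cons hadjyv
          (SimpleGraph.Walk.cons hadjxv.symm SimpleGraph.Walk.nil)),
          isPath_c3 _ _ _ hrv hxr.symm hyx, ?_⟩
        rw [walkWeight_cons, walkWeight_cons, walkWeight_cons, walkWeight_nil,
          ew_not_mem hry, ew_mem hyvF, ew_mem hvxF]
        ring
    · intro p hp
      have := hlb x p hp
      rw [bi, if_pos hx] at this
      linarith
  · -- x ∉ B : distF = 0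
    intro x hx
    refine distF_eq_of ?_ ?_
    · by_cases hxr : x = r
      · subst hxr
        exact ⟨SimpleGraph.Walk.nil, SimpleGraph.Walk.IsPath.nil, walkWeight_nil F⟩
      · obtain ⟨b, hbB, hadjxb⟩ := hdom x hx
        obtain ⟨e, heF, v, hev, hvB, hadjbv, huniq⟩ := hbedge b hbB
        have hrb : r ≠ b := fun h => hrB (h ▸ hbB)
        have hbx : b ≠ x := fun h => hx (h ▸ hbB)
        have hrxne : r ≠ x := fun h => hxr h.symm
        by_cases hvx : v = x
        · subst hvx
          have hbxF : s(b, v) ∈ F := hev ▸ heF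
          have hrbF : s(r, b) ∉ F := by
            intro hmem
            have h1 : s(r, b) = e := huniq _ hmem (by simp)
            rw [hev, Sym2.eq_iff] at h1
            rcases h1 with ⟨h, -⟩ | ⟨h, h2⟩
            · exact hrB (h ▸ hbB)
            · exact hrxne h
          refine ⟨SimpleGraph.Walk.cons (hadj b hbB) (SimpleGraph.Walk.cons
            hadjxb.symm SimpleGraph.Walk.nil), isPath_c2 _ _ hrxne, ?_⟩
          rw [walkWeight_cons, walkWeight_cons, walkWeight_nil,
            ew_not_mem hrbF, ew_mem hbxF]
          ring
        · by_cases hvr : v = r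
          · have hrbF : s(r, b) ∈ F := by
              rw [Sym2.eq_swap, ← hvr, ← hev]
              exact heF
            have hbxF : s(b, x) ∉ F := by
              intro hmem
              have h1 : s(b, x) = e := huniq _ hmem (by simp)
              rw [hev, hvr, Sym2.eq_iff] at h1
              rcases h1 with ⟨-, h⟩ | ⟨h, -⟩
              · exact hxr h
              · exact hrB (h ▸ hbB)
            refine ⟨SimpleGraph.Walk.cons (hadj b hbB) (SimpleGraph.Walk.cons
              hadjxb.symm SimpleGraph.Walk.nil), isPath_c2 _ _ hrxne, ?_⟩
            rw [walkWeight_cons, walkWeight_cons, walkWeight_nil,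
              ew_mem hrbF, ew_not_mem hbxF]
            ring
          · obtain ⟨e', he'F, he'ne, hve'⟩ := hother e heF v (by rw [hev]; simp) hvB hvr
            obtain ⟨y, hyB, hye'⟩ := hFB e' he'F
            have hyv : y ≠ v := fun h => hvB (h ▸ hyB)
            have he'eq : e' = s(y, v) := ((Sym2.mem_and_mem_iff hyv).mp ⟨hye', hve'⟩)
            have hyb : y ≠ b := by
              intro h
              subst h
              exact he'ne (huniq e' he'F hye')
            have hry : s(r, y) ∉ F := by
              intro hmem
              have h1 : s(r, y) = e' := hP2 _ hmem _ he'F y hyB (by simp) hye'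
              rw [he'eq, Sym2.eq_iff] at h1
              rcases h1 with ⟨h, -⟩ | ⟨h, -⟩
              · exact hrB (h ▸ hyB)
              · exact hvr h.symm
            have hyvF : s(y, v) ∈ F := he'eq ▸ he'F
            have hvbF : s(v, b) ∈ F := by
              rw [Sym2.eq_swap, ← hev]
              exact heF
            have hbxF : s(b, x) ∉ F := by
              intro hmem
              have h1 : s(b, x) = e := huniq _ hmem (by simp)
              rw [hev, Sym2.eq_iff] at h1
              rcases h1 with ⟨-, h⟩ | ⟨h, -⟩
              · exact hvx h.symm
              · exact hvB (h ▸ hbB)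
            have hadjry : G.Adj r y := hadj y hyB
            have hadjyv : G.Adj y v := G.mem_edgeSet.mp (hFE hyvF)
            have hryne : r ≠ y := fun h => hrB (h ▸ hyB)
            have hrv : r ≠ v := fun h => hvr h.symm
            have hyx : y ≠ x := fun h => hx (h ▸ hyB)
            have hvxne : v ≠ x := hvx
            refine ⟨SimpleGraph.Walk.cons hadjry (SimpleGraph.Walk.cons hadjyv
              (SimpleGraph.Walk.cons hadjbv.symm (SimpleGraph.Walk.cons
              hadjxb.symm SimpleGraph.Walk.nil))),
              isPath_c4 _ _ _ _ hrv hrb hrxne hyb hyx hvxne, ?_⟩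
            rw [walkWeight_cons, walkWeight_cons, walkWeight_cons, walkWeight_cons,
              walkWeight_nil, ew_not_mem hry, ew_mem hyvF, ew_mem hvbF, ew_not_mem hbxF]
            ring
    · intro p hp
      have := hlb x p hp
      rw [bi, if_neg hx] at this
      linarith
end
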